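/- arXiv:1405.2939 — 2 statements merged into one kernel-verified Lean document; each statement's English description precedes it below -/
import Mathlib

section
/- Let X be an abelian Polish group and let A ⊆ X be a universally measurable set with the property that for every compact set K ⊆ X there exists x_K ∈ X with K + x_K ⊆ A. Then A is not Haar null. -/
open MeasureTheory

/-- A set is *universally measurable* if it is measurable with respect to the completion of
every Borel probability measure. -/
def UnivMeasurable {X : Type*} [TopologicalSpace X] (B : Set X) : Prop :=
  ∀ μ : @Measure X (borel X), @IsProbabilityMeasure X (borel X) μ →
    @NullMeasurableSet X (borel X) B μ

/-- A set `A` is *Haar null* if there are a Borel probability measure `μ` and a universally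
measurable set `B ⊇ A` with `μ (B + x) = 0` for every `x`. -/
def IsHaarNull {X : Type*} [TopologicalSpace X] [AddCommGroup X] (A : Set X) : Prop :=
  ∃ μ : @Measure X (borel X), @IsProbabilityMeasure X (borel X) μ ∧
    ∃ B : Set X, A ⊆ B ∧ UnivMeasurable B ∧ ∀ x : X, μ ((· + x) '' B) = 0

open Set TopologicalSpace Metric ENNReal in
/-- Ulam's theorem (the part we need): a Borel probability measure on a complete separable
metric space gives positive mass to some compact set. -/
lemma exists_isCompact_pos_measure {X : Type*} [MetricSpace X] [CompleteSpace X]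
    [SecondCountableTopology X] [MeasurableSpace X] [OpensMeasurableSpace X]
    (μ : Measure X) [IsProbabilityMeasure μ] :
    ∃ K : Set X, IsCompact K ∧ 0 < μ K := by
  have hne : Nonempty X := by
    rcases nonempty_of_measure_ne_zero (by simp : μ univ ≠ 0) with ⟨x, -⟩
    exact ⟨x⟩
  set u := denseSeq X with hu
  set S : ℕ → ℕ → Set X := fun n N => accumulate (fun m => closedBall (u m) (1/(n+1))) N with hS
  have hSclosed : ∀ n N, IsClosed (S n N) := by
    intro n N
    rw [hS]
    simp only [accumulate_def]
    exact Set.Finite.isClosed_biUnion (Set.finite_Iic N) (fun m _ => isClosed_closedBall)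
  have hScover : ∀ n, ⋃ N, S n N = univ := by
    intro n
    rw [hS]
    simp only [iUnion_accumulate]
    ext x
    simp only [mem_iUnion, mem_univ, iff_true]
    obtain ⟨m, hm⟩ := (denseRange_denseSeq X).exists_dist_lt x
      (by positivity : (0:ℝ) < 1/(n+1))
    exact ⟨m, le_of_lt hm⟩
  set δ : ℕ → ℝ≥0∞ := fun n => (2⁻¹ : ℝ≥0∞)^(n+2) with hδ
  have hδpos : ∀ n, δ n ≠ 0 := fun n => pow_ne_zero _ (by norm_num)
  have hδle : ∀ n, δ n ≤ 1 := by
    intro n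
    apply pow_le_one₀ zero_le (ENNReal.inv_le_one.mpr one_le_two)
  have key : ∀ n, ∃ N, μ (S n N)ᶜ ≤ δ n := by
    intro n
    have hsup : ⨆ N, μ (S n N) = 1 := by
      rw [← ((monotone_accumulate).directed_le).measure_iUnion, hScover n, measure_univ]
    have hlt : 1 - δ n < ⨆ N, μ (S n N) := by
      rw [hsup]
      exact ENNReal.sub_lt_self one_ne_top one_ne_zero (hδpos n)
    obtain ⟨N, hN⟩ := lt_iSup_iff.mp hlt
    refine ⟨N, ?_⟩
    rw [prob_compl_eq_one_sub (hSclosed n N).measurableSet]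
    rw [tsub_le_iff_right]
    calc (1:ℝ≥0∞) = (1 - δ n) + δ n := (tsub_add_cancel_of_le (hδle n)).symm
      _ ≤ μ (S n N) + δ n := add_le_add_left hN.le _
      _ = δ n + μ (S n N) := add_comm _ _
  choose N hN using key
  refine ⟨⋂ n, S n (N n), ?_, ?_⟩
  · apply TotallyBounded.isCompact_of_isClosed
    · rw [Metric.totallyBounded_iff]
      intro ε hε
      obtain ⟨n, hn⟩ := exists_nat_one_div_lt hε
      refine ⟨u '' Set.Iic (N n), (Set.finite_Iic _).image _, ?_⟩
      intro x hx
      have hx' : x ∈ S n (N n) := mem_iInter.mp hx n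
      rw [hS] at hx'
      simp only [accumulate_def, mem_iUnion] at hx'
      obtain ⟨m, hm, hxm⟩ := hx'
      simp only [mem_iUnion]
      exact ⟨u m, ⟨⟨m, hm, rfl⟩, lt_of_le_of_lt hxm hn⟩⟩
    · exact isClosed_iInter (fun n => hSclosed n (N n))
  · rw [pos_iff_ne_zero]
    intro h0
    have hc : μ (⋂ n, S n (N n))ᶜ = 1 := by
      rw [prob_compl_eq_one_sub (isClosed_iInter (fun n => hSclosed n (N n))).measurableSet, h0,
        tsub_zero]
    have hle : μ (⋂ n, S n (N n))ᶜ ≤ 2⁻¹ := by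
      rw [compl_iInter]
      refine le_trans (measure_iUnion_le _) (le_trans (ENNReal.tsum_le_tsum (fun n => hN n)) ?_)
      have : ∑' n : ℕ, δ n = 2⁻¹ := by
        rw [hδ]
        simp_rw [pow_add, ENNReal.tsum_mul_right, ENNReal.tsum_geometric,
          ENNReal.one_sub_inv_two, inv_inv]
        rw [show ((2:ℝ≥0∞)⁻¹)^2 = 2⁻¹ * 2⁻¹ by ring, ← mul_assoc,
          ENNReal.mul_inv_cancel two_ne_zero ENNReal.ofNat_ne_top, one_mul]
      rw [this]
    rw [hc] at hle
    exact absurd hle (by norm_num)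

theorem not_haarNull_of_compact_translates
    {X : Type*} [TopologicalSpace X] [PolishSpace X] [AddCommGroup X] [IsTopologicalAddGroup X]
    (A : Set X) (hA : UnivMeasurable A)
    (h : ∀ K : Set X, IsCompact K → ∃ x : X, (· + x) '' K ⊆ A) :
    ¬ IsHaarNull A := by
  rintro ⟨μ, hμ, B, hAB, -, hB0⟩
  letI := TopologicalSpace.upgradeIsCompletelyMetrizable X
  letI : MeasurableSpace X := borel X
  haveI : BorelSpace X := ⟨rfl⟩
  haveI : IsProbabilityMeasure μ := hμ
  obtain ⟨K, hK, hKpos⟩ := exists_isCompact_pos_measure μ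
  obtain ⟨x, hx⟩ := h K hK
  have hsub : K ⊆ (· + (-x)) '' B := by
    intro k hk
    exact ⟨k + x, hAB (hx ⟨k, hk, rfl⟩), add_neg_cancel_right k x⟩
  have hle : μ K ≤ μ ((· + (-x)) '' B) := measure_mono hsub
  rw [hB0 (-x)] at hle
  exact absurd (le_antisymm hle zero_le) (ne_of_gt hKpos)
end

section
/- Let A = {(xₙ)ₙ ∈ c₀ : xₙ ≥ 0 for all n} be the nonnegative cone in the Banach space c₀ of real sequences converging to 0. Then for every compact set K ⊆ c₀ there exists y ∈ c₀ such that K + y ⊆ A. -/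
open ZeroAtInfty Filter

namespace AuxC0

lemma dist_apply_le (f g : C₀(ℕ, ℝ)) (n : ℕ) : dist (f n) (g n) ≤ dist f g := by
  have h := BoundedContinuousFunction.dist_coe_le_dist (f := f.toBCF) (g := g.toBCF) n
  rwa [ZeroAtInftyContinuousMap.dist_toBCF_eq_dist] at h

lemma continuous_eval (n : ℕ) : Continuous (fun f : C₀(ℕ, ℝ) => f n) :=
  (LipschitzWith.mk_one fun f g => dist_apply_le f g n).continuous

end AuxC0

theorem compact_translates_into_nonneg_cone
    (K : Set C₀(ℕ, ℝ)) (hK : IsCompact K) :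
    ∃ y : C₀(ℕ, ℝ), (· + y) '' K ⊆ {f : C₀(ℕ, ℝ) | ∀ n : ℕ, 0 ≤ f n} := by
  -- define g n as the sup of 0 and all -(f n), f ∈ K
  set S : ℕ → Set ℝ := fun n => insert 0 ((fun f : C₀(ℕ, ℝ) => -(f n)) '' K) with hS
  have hSne : ∀ n, (S n).Nonempty := fun n => ⟨0, Set.mem_insert _ _⟩
  have hScpt : ∀ n, IsCompact (S n) := fun n =>
    (isCompact_singleton (x := (0 : ℝ))).union
      (hK.image ((AuxC0.continuous_eval n).neg))
  have hSbdd : ∀ n, BddAbove (S n) := fun n => (hScpt n).bddAbove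
  set g : ℕ → ℝ := fun n => sSup (S n) with hg
  have hg_nonneg : ∀ n, 0 ≤ g n := fun n =>
    le_csSup (hSbdd n) (Set.mem_insert _ _)
  have hg_ge : ∀ n, ∀ f ∈ K, -(f n) ≤ g n := fun n f hf =>
    le_csSup (hSbdd n) (Set.mem_insert_of_mem _ ⟨f, hf, rfl⟩)
  -- g tends to 0
  have hg_tendsto : Tendsto g atTop (nhds 0) := by
    rw [Metric.tendsto_atTop]
    intro ε hε
    obtain ⟨t, htfin, htK⟩ := (Metric.totallyBounded_iff.mp hK.totallyBounded) (ε / 4)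
      (by linarith)
    -- each element of t eventually small
    have h1 : ∀ᶠ n in atTop, ∀ u ∈ t, |(u : C₀(ℕ, ℝ)) n| < ε / 4 := by
      rw [eventually_all_finite htfin]
      intro u _
      have := u.zero_at_infty'
      rw [cocompact_eq_atTop (α := ℕ)] at this
      have := Metric.tendsto_nhds.mp this (ε / 4) (by linarith)
      simpa [Real.dist_eq] using this
    obtain ⟨N, hN⟩ := eventually_atTop.mp h1
    refine ⟨N, fun n hn => ?_⟩
    have hbound : ∀ f ∈ K, |f n| ≤ ε / 4 + ε / 4 := by
      intro f hf
      obtain ⟨u, hu, hfu⟩ := Set.mem_iUnion₂.mp (htK hf)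
      have hd : dist (f n) (u n) ≤ dist f u := AuxC0.dist_apply_le f u n
      have : |f n - u n| ≤ ε / 4 := by
        rw [← Real.dist_eq]
        exact hd.trans (le_of_lt (Metric.mem_ball.mp hfu))
      have hun : |(u : C₀(ℕ, ℝ)) n| < ε / 4 := hN n hn u hu
      calc |f n| = |(f n - u n) + u n| := by ring_nf
        _ ≤ |f n - u n| + |u n| := abs_add_le _ _
        _ ≤ ε / 4 + ε / 4 := by linarith [le_of_lt hun]
    have hgle : g n ≤ ε / 4 + ε / 4 := by
      apply csSup_le (hSne n)
      rintro x (rfl | ⟨f, hf, rfl⟩)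
      · linarith
      · have := hbound f hf
        have := neg_abs_le (f n)
        linarith [abs_nonneg (f n)]
    rw [Real.dist_eq, sub_zero, abs_of_nonneg (hg_nonneg n)]
    calc g n ≤ ε / 4 + ε / 4 := hgle
      _ < ε := by linarith
  -- build y
  refine ⟨⟨⟨g, continuous_of_discreteTopology⟩, ?_⟩, ?_⟩
  · rwa [cocompact_eq_atTop (α := ℕ)]
  · rintro _ ⟨f, hf, rfl⟩ n
    have := hg_ge n f hf
    simp only [Set.mem_setOf_eq]
    show 0 ≤ f n + g n
    linarith
end
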